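/- Let (R, m) be a commutative quasi-local ring with m^3 = 0. Then R satisfies (⋄) if and only if its associated graded ring gr(R) = R/m ⊕ m/m^2 ⊕ m^2 satisfies (⋄). -/

import Mathlib

open IsLocalRing

/-- Property (⋄) for a ring: every cyclic module with essential simple socle is
Artinian. -/
def HasDiamond (A : Type v) [Ring A] : Prop :=
  ∀ I : Ideal A,
    (∃ S : Submodule A (A ⧸ I), IsSimpleModule A S ∧
      ∀ N : Submodule A (A ⧸ I), N ≠ ⊥ → S ⊓ N ≠ ⊥) →
    IsArtinian A (A ⧸ I)


section Helpers

variable {A : Type*} [CommRing A] {m : Ideal A} {M : Type*} [AddCommGroup M] [Module A M]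

theorem myTorsion (hM : ∀ z ∈ m, ∀ x : M, z • x = 0) :
    Module.IsTorsionBySet A M m := fun x z => hM z z.2 x

/-- A submodule over `A` is a submodule over `A ⧸ m` for the induced structure. -/
def toKSub (hM : Module.IsTorsionBySet A M (m : Set A)) (N : Submodule A M) :
    letI := hM.module
    Submodule (A ⧸ m) M :=
  letI := hM.module
  { carrier := N
    add_mem' := fun ha hb => N.add_mem ha hb
    zero_mem' := N.zero_mem
    smul_mem' := by
      rintro c x hx
      obtain ⟨a, rfl⟩ := Ideal.Quotient.mk_surjective c
      rw [hM.mk_smul]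
      exact N.smul_mem a hx }

theorem isArtinian_of_torsion_of_kArtinian (hM : Module.IsTorsionBySet A M (m : Set A)) :
    letI := hM.module
    IsArtinian (A ⧸ m) M → IsArtinian A M := by
  letI := hM.module
  intro hk
  have emb : Submodule A M ↪o Submodule (A ⧸ m) M := by
    refine ⟨⟨toKSub hM, ?_⟩, ?_⟩
    · intro N N' h
      ext x
      exact SetLike.ext_iff.mp h x
    · intro N N'
      constructor
      · intro h x hx
        exact h hx
      · intro h x hx
        exact h hx
  exact emb.wellFoundedLT

theorem isArtinian_of_torsion_of_finite (hmax : m.IsMaximal)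
    (hM : Module.IsTorsionBySet A M (m : Set A)) (hfin : Module.Finite A M) :
    IsArtinian A M := by
  letI := hM.module
  haveI := hM.isScalarTower (S := A)
  letI : Field (A ⧸ m) := Ideal.Quotient.field m
  haveI : Module.Finite (A ⧸ m) M := Module.Finite.of_restrictScalars_finite A (A ⧸ m) M
  haveI : IsArtinian (A ⧸ m) M := inferInstance
  exact isArtinian_of_torsion_of_kArtinian hM this

theorem finite_of_torsion_of_artinian (hmax : m.IsMaximal)
    (hM : Module.IsTorsionBySet A M (m : Set A)) (hart : IsArtinian A M) :
    Module.Finite A M := by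
  letI := hM.module
  haveI := hM.isScalarTower (S := A)
  letI : Field (A ⧸ m) := Ideal.Quotient.field m
  haveI : IsArtinian (A ⧸ m) M := isArtinian_of_tower A hart
  haveI : Module.Finite (A ⧸ m) M :=
    (IsSemisimpleModule.finite_tfae (R := A ⧸ m) (M := M)).out 2 0 |>.mp ‹_›
  obtain ⟨s, hs⟩ := Module.Finite.fg_top (R := A ⧸ m) (M := M)
  refine ⟨⟨s, ?_⟩⟩
  rw [eq_top_iff]
  rw [eq_top_iff] at hs
  intro x _
  have hx : x ∈ Submodule.span (A ⧸ m) (s : Set M) := hs trivial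
  refine Submodule.span_induction ?_ ?_ ?_ ?_ hx
  · exact fun y hy => Submodule.subset_span hy
  · exact Submodule.zero_mem _
  · exact fun y z _ _ hy hz => Submodule.add_mem _ hy hz
  · intro c y _ hy
    obtain ⟨a, rfl⟩ := Ideal.Quotient.mk_surjective c
    rw [hM.mk_smul]
    exact Submodule.smul_mem _ a hy

end Helpers


/-- The auxiliary "bad pair" condition witnessing failure of (⋄) for a quasi-local
ring with `m ^ 3 = 0`; it only depends on the associated graded data. -/
def BadPair (A : Type v) [CommRing A] (m : Ideal A) : Prop :=
  ∃ P Q : Ideal A,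
    m ^ 2 ≤ P ∧ P ≤ m ∧ Q ≤ m ^ 2 ∧ P * m ≤ Q ∧
    (∃ w, w ∈ m ^ 2 ∧ w ∉ Q ∧ m ^ 2 ≤ Q ⊔ Ideal.span {w}) ∧
    (∀ r ∈ m, (∀ x ∈ m, r * x ∈ Q) → r ∈ P) ∧
    ¬∃ F : Finset A, ↑F ⊆ (m : Set A) ∧ m ≤ P ⊔ Ideal.span (↑F : Set A)

section Abstract

variable {A : Type v} [CommRing A] {m : Ideal A}

theorem kill3 (h3 : m ^ 3 = ⊥) {u z : A} (hum : u ∈ m ^ 2) (hz : z ∈ m) : u * z = 0 := by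
  have h : u * z ∈ m ^ 3 := by
    rw [pow_succ]; exact Ideal.mul_mem_mul hum hz
  rwa [h3, Ideal.mem_bot] at h

theorem mem_sq {x y : A} (hx : x ∈ m) (hy : y ∈ m) : x * y ∈ m ^ 2 := by
  rw [pow_two]; exact Ideal.mul_mem_mul hx hy

theorem smul_unit_mem {M : Type*} [AddCommGroup M] [Module A M] (N : Submodule A M)
    {a : A} (h : IsUnit a) {q : M} (hq : a • q ∈ N) : q ∈ N := by
  obtain ⟨u, rfl⟩ := h
  have h4 : q = ((u⁻¹ : Aˣ) : A) • ((u : A) • q) := by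
    rw [← mul_smul, Units.inv_mul, one_smul]
  rw [h4]
  exact N.smul_mem _ hq

theorem max_of_local (hu : ∀ a : A, a ∉ m → IsUnit a) (hmt : m ≠ ⊤) : m.IsMaximal := by
  refine ⟨⟨hmt, ?_⟩⟩
  intro b hb
  obtain ⟨a, haJ, ham⟩ := SetLike.exists_of_lt hb
  exact Ideal.eq_top_of_isUnit_mem b haJ (hu a ham)

theorem not_hasDiamond_of_badPair (hu : ∀ a : A, a ∉ m → IsUnit a) (h3 : m ^ 3 = ⊥)
    (hmt : m ≠ ⊤) (hb : BadPair A m) : ¬ HasDiamond A := by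
  classical
  obtain ⟨P, Q, hm2P, hPm, hQm2, hPmQ, ⟨w, hwm2, hwQ, hcover⟩, hc, hd⟩ := hb
  have hmax := max_of_local hu hmt
  -- `m` is not contained in `P`
  have hPm' : ¬ m ≤ P := by
    intro h
    refine hd ⟨∅, by simp, ?_⟩
    simp only [Finset.coe_empty, Ideal.span_empty, sup_bot_eq]
    exact h
  -- Zorn's lemma: a maximal ideal between Q and P avoiding w
  set 𝒮 : Set (Ideal A) := {J | Q ≤ J ∧ J ≤ P ∧ w ∉ J} with h𝒮
  have hQS : Q ∈ 𝒮 := ⟨le_rfl, le_trans hQm2 hm2P, hwQ⟩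
  obtain ⟨J, hQJ, hJmax⟩ := zorn_le_nonempty₀ 𝒮 (by
    intro c hc' hchain y hy
    refine ⟨sSup c, ⟨le_trans (hc' hy).1 (le_sSup hy), sSup_le fun z hz => (hc' hz).2.1, ?_⟩,
      fun z hz => le_sSup hz⟩
    rw [Submodule.mem_sSup_of_directed ⟨y, hy⟩ hchain.directedOn]
    rintro ⟨z, hzc, hwz⟩
    exact (hc' hzc).2.2 hwz) Q hQS
  obtain ⟨hQJ', hJP, hwJ⟩ := hJmax.1
  -- covering property
  have hcov : ∀ x ∈ P, x ∈ J ⊔ Ideal.span {w} := by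
    intro x hxP
    by_cases hxJ : x ∈ J
    · exact Submodule.mem_sup_left hxJ
    have hwJ' : w ∈ J ⊔ Ideal.span {x} := by
      by_contra hw
      have hmem : J ⊔ Ideal.span {x} ∈ 𝒮 :=
        ⟨le_trans hQJ' le_sup_left,
          sup_le hJP (Ideal.span_le.mpr (Set.singleton_subset_iff.mpr hxP)), hw⟩
      have hle : J ⊔ Ideal.span {x} ≤ J := hJmax.2 hmem le_sup_left
      exact hxJ (hle (Submodule.mem_sup_right (Ideal.subset_span rfl)))
    obtain ⟨j, hj, c0, hc0, hsum⟩ := Submodule.mem_sup.mp hwJ'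
    obtain ⟨a, ha⟩ := Ideal.mem_span_singleton'.mp hc0
    by_cases ham : a ∈ m
    · exfalso
      apply hwJ
      have haxQ : a * x ∈ Q := by
        have : x * a ∈ P * m := Ideal.mul_mem_mul hxP ham
        rw [mul_comm]; exact hPmQ this
      rw [← hsum, ← ha]
      exact J.add_mem hj (hQJ' haxQ)
    · have hun := hu a ham
      have hax : a * x = w - j := by
        rw [ha, eq_sub_iff_add_eq, add_comm]; exact hsum
      have hx : a • x ∈ J ⊔ Ideal.span {w} := by
        rw [smul_eq_mul, hax]
        exact sub_mem (Submodule.mem_sup_right (Ideal.subset_span rfl))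
          (Submodule.mem_sup_left hj)
      exact smul_unit_mem _ hun hx
  -- J ∩ m² = Q
  have hJcapm2 : ∀ u ∈ m ^ 2, u ∈ J → u ∈ Q := by
    intro u hum2 huJ
    obtain ⟨q, hq, c0, hc0, hsum⟩ := Submodule.mem_sup.mp (hcover hum2)
    obtain ⟨a, ha⟩ := Ideal.mem_span_singleton'.mp hc0
    by_cases ham : a ∈ m
    · have haw : a * w = 0 := by rw [mul_comm]; exact kill3 h3 hwm2 ham
      rw [← hsum, ← ha, haw, add_zero] at *
      exact hq
    · exfalso
      apply hwJ
      have : a • w ∈ J := by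
        rw [smul_eq_mul, ha]
        have : c0 = u - q := by rw [eq_sub_iff_add_eq, add_comm]; exact hsum
        rw [this]
        exact J.sub_mem huJ (hQJ' hq)
      exact smul_unit_mem _ (hu a ham) this
  have hwJn : w ∉ J := hwJ
  -- Claim 1 : anything outside J killed into J by m lands in the socle
  set S₀ : Submodule A (A ⧸ (J : Ideal A)) :=
    Submodule.span A {Submodule.Quotient.mk (p := (J : Submodule A A)) w} with hS₀
  have claim1 : ∀ r : A, (∀ z ∈ m, r * z ∈ J) →
      (Submodule.Quotient.mk r : A ⧸ (J : Ideal A)) ∈ S₀ := by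
    intro r hrz
    have hrm : r ∈ m := by
      by_contra hrm'
      have hun := hu r hrm'
      have hmJ : m ≤ J := by
        intro z hz
        exact smul_unit_mem (J : Submodule A A) hun
          (by rw [smul_eq_mul]; exact hrz z hz)
      exact hPm' (le_trans hmJ hJP)
    have hrP : r ∈ P := hc r hrm fun x hx => hJcapm2 _ (mem_sq hrm hx) (hrz x hx)
    obtain ⟨j, hj, c0, hc0, hsum⟩ := Submodule.mem_sup.mp (hcov r hrP)
    obtain ⟨a, ha⟩ := Ideal.mem_span_singleton'.mp hc0
    have : (Submodule.Quotient.mk r : A ⧸ (J : Ideal A)) =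
        a • Submodule.Quotient.mk w := by
      rw [← Submodule.Quotient.mk_smul, smul_eq_mul, ha]
      rw [← hsum]
      rw [Submodule.Quotient.eq]
      simpa using hj
    rw [this]
    exact Submodule.smul_mem _ _ (Submodule.mem_span_singleton_self _)
  have hmk_ne : ∀ r : A, r ∉ J → (Submodule.Quotient.mk r : A ⧸ (J : Ideal A)) ≠ 0 := by
    intro r hrJ h0
    exact hrJ ((Submodule.Quotient.mk_eq_zero _).mp h0)
  -- the socle is simple
  have hw0 : (Submodule.Quotient.mk w : A ⧸ (J : Ideal A)) ≠ 0 := hmk_ne w hwJn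
  have hS₀atom : IsAtom S₀ := by
    constructor
    · intro h
      exact hw0 (Submodule.span_singleton_eq_bot.mp h)
    · intro N hN
      by_contra hNb
      obtain ⟨y, hyN, hy0⟩ := (Submodule.ne_bot_iff N).mp hNb
      obtain ⟨a, ha⟩ := Submodule.mem_span_singleton.mp (hN.le hyN)
      by_cases ham : a ∈ m
      · apply hy0
        rw [← ha, ← Submodule.Quotient.mk_smul, smul_eq_mul,
          show a * w = 0 by rw [mul_comm]; exact kill3 h3 hwm2 ham]
        rfl
      · have hwN : (Submodule.Quotient.mk w : A ⧸ (J : Ideal A)) ∈ N :=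
          smul_unit_mem N (hu a ham) (ha ▸ hyN)
        have hle : S₀ ≤ N :=
          Submodule.span_le.mpr (Set.singleton_subset_iff.mpr hwN)
        exact hN.ne (le_antisymm hN.le hle)
  intro hdia
  have hart : IsArtinian A (A ⧸ (J : Ideal A)) := by
    refine hdia J ⟨S₀, isSimpleModule_iff_isAtom.mpr hS₀atom, ?_⟩
    -- essentiality
    intro N hN0
    obtain ⟨y, hyN, hy0⟩ := (Submodule.ne_bot_iff N).mp hN0
    obtain ⟨x, rfl⟩ := Submodule.Quotient.mk_surjective _ y
    have hxJ : x ∉ J := fun h => hy0 ((Submodule.Quotient.mk_eq_zero _).mpr h)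
    have key : ∀ r : A, r ∉ J → (∀ z ∈ m, r * z ∈ J) →
        (Submodule.Quotient.mk r : A ⧸ (J : Ideal A)) ∈ N → S₀ ⊓ N ≠ ⊥ := by
      intro r hrJ hrz hrN
      rw [Submodule.ne_bot_iff]
      exact ⟨Submodule.Quotient.mk r, Submodule.mem_inf.mpr ⟨claim1 r hrz, hrN⟩,
        hmk_ne r hrJ⟩
    by_cases h1 : ∀ z ∈ m, x * z ∈ J
    · exact key x hxJ h1 hyN
    push_neg at h1
    obtain ⟨z₁, hz₁, hxz₁⟩ := h1
    by_cases h2 : ∀ z ∈ m, x * z₁ * z ∈ J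
    · refine key (x * z₁) hxz₁ h2 ?_
      have : (Submodule.Quotient.mk (x * z₁) : A ⧸ (J : Ideal A)) =
          z₁ • Submodule.Quotient.mk x := by
        rw [← Submodule.Quotient.mk_smul, smul_eq_mul, mul_comm]
      rw [this]
      exact N.smul_mem _ hyN
    push_neg at h2
    obtain ⟨z₂, hz₂, hxz₂⟩ := h2
    refine key (x * z₁ * z₂) hxz₂ ?_ ?_
    · intro z hz
      have h0 : x * z₁ * z₂ * z = x * (z₁ * z₂ * z) := by ring
      rw [h0, kill3 h3 (mem_sq hz₁ hz₂) hz, mul_zero]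
      exact J.zero_mem
    · have : (Submodule.Quotient.mk (x * z₁ * z₂) : A ⧸ (J : Ideal A)) =
          (z₁ * z₂) • Submodule.Quotient.mk x := by
        rw [← Submodule.Quotient.mk_smul, smul_eq_mul]
        ring_nf
      rw [this]
      exact N.smul_mem _ hyN
  -- now derive a contradiction with non-finiteness
  apply hd
  have hJP2 : (J : Ideal A) ≤ P := hJP
  let φ : (A ⧸ (J : Ideal A)) →ₗ[A] (A ⧸ (P : Ideal A)) :=
    Submodule.mapQ _ _ LinearMap.id (by simpa using hJP2)
  have hφsurj : Function.Surjective φ := by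
    intro b
    obtain ⟨a, rfl⟩ := Submodule.Quotient.mk_surjective _ b
    exact ⟨Submodule.Quotient.mk a, rfl⟩
  haveI hartP : IsArtinian A (A ⧸ (P : Ideal A)) :=
    isArtinian_of_surjective _ φ hφsurj
  set T : Submodule A (A ⧸ (P : Ideal A)) := Submodule.map P.mkQ (m : Submodule A A) with hT
  haveI : IsArtinian A ↥T := inferInstance
  have htor : ∀ z ∈ m, ∀ t : ↥T, z • t = (0 : ↥T) := by
    rintro z hz ⟨t, ht⟩
    obtain ⟨x, hxm, rfl⟩ := Submodule.mem_map.mp ht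
    apply Subtype.ext
    show z • P.mkQ x = 0
    rw [← map_smul, smul_eq_mul]
    rw [Submodule.mkQ_apply, Submodule.Quotient.mk_eq_zero]
    exact hm2P (mem_sq hz hxm)
  have hfinT : Module.Finite A ↥T :=
    finite_of_torsion_of_artinian hmax (myTorsion fun z hz x => htor z hz x) inferInstance
  obtain ⟨G, hG⟩ := hfinT.fg_top
  have hlift : ∀ t : ↥T, ∃ x : A, x ∈ m ∧ P.mkQ x = ↑t := by
    rintro ⟨t, ht⟩
    obtain ⟨x, hxm, rfl⟩ := Submodule.mem_map.mp ht
    exact ⟨x, hxm, rfl⟩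
  choose f hf1 hf2 using hlift
  refine ⟨G.image f, ?_, ?_⟩
  · intro x hx
    rw [Finset.coe_image] at hx
    obtain ⟨t, _, rfl⟩ := hx
    exact hf1 t
  · intro x hx
    have hxT : P.mkQ x ∈ T := Submodule.mem_map.mpr ⟨x, hx, rfl⟩
    have h1 : (⟨P.mkQ x, hxT⟩ : ↥T) ∈ Submodule.span A (↑G : Set ↥T) := by
      rw [hG]; trivial
    have h2 : P.mkQ x ∈ Submodule.map T.subtype (Submodule.span A (↑G : Set ↥T)) :=
      Submodule.mem_map.mpr ⟨_, h1, rfl⟩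
    rw [Submodule.map_span] at h2
    have h3 : T.subtype '' (↑G : Set ↥T) ⊆ P.mkQ '' (↑(G.image f) : Set A) := by
      rintro _ ⟨t, htG, rfl⟩
      exact ⟨f t, by rw [Finset.coe_image]; exact Set.mem_image_of_mem f htG, hf2 t⟩
    have h4 : P.mkQ x ∈ Submodule.span A (P.mkQ '' (↑(G.image f) : Set A)) :=
      Submodule.span_mono h3 h2
    rw [← Submodule.map_span] at h4
    obtain ⟨c, hc', hcx⟩ := Submodule.mem_map.mp h4
    have hxc : x - c ∈ P := by
      rw [← Submodule.Quotient.eq]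
      exact (hcx.symm : _)
    have : x = (x - c) + c := by ring
    rw [this]
    exact Submodule.add_mem _ (Submodule.mem_sup_left hxc)
      (Submodule.mem_sup_right (by rwa [Ideal.submodule_span_eq] at hc'))

end Abstract
section Abstract2

variable {A : Type v} [CommRing A] {m : Ideal A}

theorem hasDiamond_of_not_badPair (hu : ∀ a : A, a ∉ m → IsUnit a) (h3 : m ^ 3 = ⊥)
    (hmt : m ≠ ⊤) (hnb : ¬ BadPair A m) : HasDiamond A := by
  classical
  have hmax := max_of_local hu hmt
  intro I hsoc
  obtain ⟨S, hsimp, hess⟩ := hsoc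
  have hatom : IsAtom S := isSimpleModule_iff_isAtom.mp hsimp
  have hSne : S ≠ ⊥ := hatom.1
  obtain ⟨s₀, hs₀S, hs₀ne⟩ := (Submodule.ne_bot_iff S).mp hSne
  have hcont : ∀ N : Submodule A (A ⧸ I), N ≠ ⊥ → S ≤ N := by
    intro N hN
    rcases hatom.le_iff.mp (inf_le_left : S ⊓ N ≤ S) with h | h
    · exact absurd h (hess N hN)
    · exact inf_eq_left.mp h
  have hSt : ∀ z ∈ m, ∀ s ∈ S, z • s = 0 := by
    have hms : m • S = ⊥ := by
      rcases hatom.le_iff.mp (Submodule.smul_le_right : m • S ≤ S) with h | h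
      · exact h
      · exfalso
        have e0 : m ^ 3 = m • (m • m) := by
          rw [Ideal.smul_eq_mul, Ideal.smul_eq_mul]; ring
        have e1 : m ^ 3 • S = S := by
          rw [e0, Submodule.smul_assoc, Submodule.smul_assoc, h, h, h]
        rw [h3, Submodule.bot_smul] at e1
        exact hSne e1.symm
    intro z hz s hs
    have h5 : z • s ∈ m • S := Submodule.smul_mem_smul hz hs
    rwa [hms, Submodule.mem_bot] at h5
  have hIm : I ≤ m := by
    by_contra h
    obtain ⟨a, haI, ham⟩ := SetLike.not_le_iff_exists.mp h
    have htop : I = ⊤ := Ideal.eq_top_of_isUnit_mem I haI (hu a ham)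
    have hsub : Subsingleton (A ⧸ I) :=
      Submodule.Quotient.subsingleton_iff.mpr htop
    apply hSne
    ext x
    simp [Subsingleton.elim x 0]
  have hsocS : ∀ q : A ⧸ I, (∀ z ∈ m, z • q = 0) → q ∈ S := by
    intro q hq
    by_cases hq0 : q = 0
    · rw [hq0]; exact S.zero_mem
    have hle : S ≤ Submodule.span A {q} :=
      hcont _ (by rwa [Ne, Submodule.span_singleton_eq_bot])
    obtain ⟨a, ha⟩ := Submodule.mem_span_singleton.mp (hle hs₀S)
    by_cases ham : a ∈ m
    · exact absurd (ha.symm.trans (hq a ham)) hs₀ne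
    · exact smul_unit_mem S (hu a ham) (ha ▸ hs₀S)
  have hSspan : S = Submodule.span A {s₀} := by
    rcases hatom.le_iff.mp
      (Submodule.span_le.mpr (Set.singleton_subset_iff.mpr hs₀S)) with h | h
    · exact absurd (Submodule.span_singleton_eq_bot.mp h) hs₀ne
    · exact h.symm
  set S₂ : Submodule A (A ⧸ I) := Submodule.map I.mkQ (m ^ 2 : Ideal A) with hS₂def
  have hmk0 : ∀ {v : A}, v ∈ I → (Submodule.Quotient.mk v : A ⧸ I) = 0 :=
    fun hv => (Submodule.Quotient.mk_eq_zero _).mpr hv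
  have hS₂S : S₂ ≤ S := by
    rintro q hq2
    obtain ⟨u, hum, rfl⟩ := Submodule.mem_map.mp hq2
    apply hsocS
    intro z hz
    rw [Submodule.mkQ_apply, ← Submodule.Quotient.mk_smul, smul_eq_mul,
      show z * u = 0 by rw [mul_comm]; exact kill3 h3 hum hz]
    exact hmk0 I.zero_mem
  have hstar : ∃ F : Finset A, ↑F ⊆ (m : Set A) ∧
      m ≤ (I ⊔ m ^ 2) ⊔ Ideal.span (↑F : Set A) := by
    by_cases hm2I : m ^ 2 ≤ I
    · by_cases hmI : m ≤ I
      · refine ⟨∅, by simp, ?_⟩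
        simp only [Finset.coe_empty, Ideal.span_empty, sup_bot_eq]
        exact le_trans hmI le_sup_left
      obtain ⟨x₁, hx₁m, hx₁I⟩ := SetLike.not_le_iff_exists.mp hmI
      have hT1ne : Submodule.map I.mkQ (m : Submodule A A) ≠ ⊥ := by
        rw [Submodule.ne_bot_iff]
        refine ⟨I.mkQ x₁, Submodule.mem_map.mpr ⟨x₁, hx₁m, rfl⟩, ?_⟩
        rw [Submodule.mkQ_apply]
        exact fun h0 => hx₁I ((Submodule.Quotient.mk_eq_zero _).mp h0)
      have hST1 : S ≤ Submodule.map I.mkQ (m : Submodule A A) := hcont _ hT1ne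
      obtain ⟨w₀, hw₀m, hw₀⟩ := Submodule.mem_map.mp (hST1 hs₀S)
      refine ⟨{w₀}, by simpa using hw₀m, ?_⟩
      rw [Finset.coe_singleton]
      intro x hx
      have hxS : (Submodule.Quotient.mk x : A ⧸ I) ∈ S := by
        apply hsocS
        intro z hz
        rw [← Submodule.Quotient.mk_smul, smul_eq_mul]
        exact hmk0 (hm2I (mem_sq hz hx))
      rw [hSspan] at hxS
      obtain ⟨a, ha⟩ := Submodule.mem_span_singleton.mp hxS
      have hsub : x - a * w₀ ∈ I := by
        rw [← Submodule.Quotient.eq]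
        rw [← ha, ← hw₀, Submodule.mkQ_apply, ← Submodule.Quotient.mk_smul, smul_eq_mul]
      have hx' : x = (x - a * w₀) + a * w₀ := by ring
      rw [hx']
      refine Submodule.add_mem _ (Submodule.mem_sup_left (Submodule.mem_sup_left hsub))
        (Submodule.mem_sup_right ?_)
      exact Ideal.mem_span_singleton'.mpr ⟨a, by simp⟩
    · obtain ⟨u₀, hu₀m2, hu₀I⟩ := SetLike.not_le_iff_exists.mp hm2I
      have hS₂ne : S₂ ≠ ⊥ := by
        rw [Submodule.ne_bot_iff]
        refine ⟨I.mkQ u₀, Submodule.mem_map.mpr ⟨u₀, hu₀m2, rfl⟩, ?_⟩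
        rw [Submodule.mkQ_apply]
        exact fun h0 => hu₀I ((Submodule.Quotient.mk_eq_zero _).mp h0)
      have hSS₂ : S ≤ S₂ := hcont _ hS₂ne
      obtain ⟨w, hwm2, hw⟩ := Submodule.mem_map.mp (hSS₂ hs₀S)
      have hwI : w ∉ I := by
        intro h
        apply hs₀ne
        rw [← hw, Submodule.mkQ_apply]
        exact hmk0 h
      by_contra hstar'
      apply hnb
      refine ⟨I ⊔ m ^ 2, I ⊓ m ^ 2, le_sup_right,
        sup_le hIm (Ideal.pow_le_self two_ne_zero), inf_le_right, ?_,
        ⟨w, hwm2, fun h => hwI h.1, ?_⟩, ?_, ?_⟩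
      · -- (I ⊔ m²) * m ≤ I ⊓ m²
        rw [Ideal.sup_mul]
        apply sup_le
        · refine Ideal.mul_le.mpr fun r hr z hz => ?_
          exact ⟨I.mul_mem_right _ hr, mem_sq (hIm hr) hz⟩
        · refine Ideal.mul_le.mpr fun r hr z hz => ?_
          rw [kill3 h3 hr hz]
          exact Submodule.zero_mem _
      · -- covering
        intro u hum2
        have huS : (Submodule.Quotient.mk u : A ⧸ I) ∈ S :=
          hS₂S (Submodule.mem_map.mpr ⟨u, hum2, rfl⟩)
        rw [hSspan] at huS
        obtain ⟨a, ha⟩ := Submodule.mem_span_singleton.mp huS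
        have hsub : u - a * w ∈ I ⊓ m ^ 2 := by
          refine Submodule.mem_inf.mpr ⟨?_, ?_⟩
          · rw [← Submodule.Quotient.eq]
            rw [← ha, ← hw, Submodule.mkQ_apply, ← Submodule.Quotient.mk_smul, smul_eq_mul]
          · exact Submodule.sub_mem _ hum2 (Ideal.mul_mem_left _ a hwm2)
        have hu' : u = (u - a * w) + a * w := by ring
        rw [hu']
        exact Submodule.add_mem _ (Submodule.mem_sup_left hsub)
          (Submodule.mem_sup_right (Ideal.mem_span_singleton'.mpr ⟨a, by simp⟩))
      · -- condition (c)
        intro r hrm hr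
        have hrS : (Submodule.Quotient.mk r : A ⧸ I) ∈ S := by
          apply hsocS
          intro z hz
          rw [← Submodule.Quotient.mk_smul, smul_eq_mul]
          exact hmk0 (by rw [mul_comm]; exact (hr z hz).1)
        rw [hSspan] at hrS
        obtain ⟨a, ha⟩ := Submodule.mem_span_singleton.mp hrS
        have hsub : r - a * w ∈ I := by
          rw [← Submodule.Quotient.eq]
          rw [← ha, ← hw, Submodule.mkQ_apply, ← Submodule.Quotient.mk_smul, smul_eq_mul]
        have hr' : r = (r - a * w) + a * w := by ring
        rw [hr']
        exact Submodule.add_mem _ (Submodule.mem_sup_left hsub)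
          (Submodule.mem_sup_right (Ideal.mul_mem_left _ a hwm2))
      · exact hstar'
  obtain ⟨F, hFm, hFspan⟩ := hstar
  have hS₂fin : ∃ gs : Finset (A ⧸ I), S₂ = Submodule.span A (↑gs : Set (A ⧸ I)) := by
    rcases hatom.le_iff.mp hS₂S with h | h
    · exact ⟨∅, by simpa using h⟩
    · refine ⟨{s₀}, ?_⟩
      rw [h, hSspan]
      simp
  obtain ⟨gs, hgs⟩ := hS₂fin
  haveI hS₂art : IsArtinian A ↥S₂ := by
    apply isArtinian_of_torsion_of_finite hmax (myTorsion ?_)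
    · have hfin : Module.Finite A ↥(Submodule.span A (↑gs : Set (A ⧸ I))) :=
        Module.Finite.span_of_finite A gs.finite_toSet
      rwa [← hgs] at hfin
    · rintro z hz ⟨t, ht⟩
      obtain ⟨u, hum2, rfl⟩ := Submodule.mem_map.mp ht
      apply Subtype.ext
      show z • I.mkQ u = 0
      rw [Submodule.mkQ_apply, ← Submodule.Quotient.mk_smul, smul_eq_mul,
        show z * u = 0 by rw [mul_comm]; exact kill3 h3 hum2 hz]
      exact hmk0 I.zero_mem
  set χ : A →ₗ[A] ((A ⧸ I) ⧸ S₂) := S₂.mkQ ∘ₗ I.mkQ with hχ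
  have hχI : ∀ p ∈ I, χ p = 0 := by
    intro p hp
    show S₂.mkQ (I.mkQ p) = 0
    rw [Submodule.mkQ_apply, Submodule.mkQ_apply, hmk0 hp]
    exact (Submodule.Quotient.mk_eq_zero _).mpr (Submodule.zero_mem _)
  have hχm2 : ∀ u ∈ m ^ 2, χ u = 0 := by
    intro u hu'
    show S₂.mkQ (I.mkQ u) = 0
    rw [Submodule.mkQ_apply, Submodule.Quotient.mk_eq_zero]
    exact Submodule.mem_map.mpr ⟨u, hu', rfl⟩
  set T1' : Submodule A ((A ⧸ I) ⧸ S₂) := Submodule.map χ (m : Submodule A A) with hT1'def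
  have hT1'span : T1' = Submodule.span A (χ '' (↑F : Set A)) := by
    apply le_antisymm
    · rintro _ ⟨x, hxm, rfl⟩
      obtain ⟨p, hp, c, hcF, hsum⟩ := Submodule.mem_sup.mp (hFspan hxm)
      obtain ⟨i, hi, u, hu', hsum2⟩ := Submodule.mem_sup.mp hp
      have hc : χ c ∈ Submodule.span A (χ '' (↑F : Set A)) := by
        have h6 : χ c ∈ Submodule.map χ (Submodule.span A (↑F : Set A)) := by
          refine Submodule.mem_map.mpr ⟨c, ?_, rfl⟩
          rwa [Ideal.submodule_span_eq]
        rwa [Submodule.map_span] at h6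
      have h7 : χ x = χ c := by
        rw [← hsum, ← hsum2, map_add, map_add, hχI i hi, hχm2 u hu', zero_add, zero_add]
      rwa [h7]
    · rw [Submodule.span_le]
      rintro _ ⟨x, hxF, rfl⟩
      exact Submodule.mem_map.mpr ⟨x, hFm hxF, rfl⟩
  haveI hT1'art : IsArtinian A ↥T1' := by
    apply isArtinian_of_torsion_of_finite hmax (myTorsion ?_)
    · have hfin : Module.Finite A ↥(Submodule.span A (χ '' (↑F : Set A))) :=
        Module.Finite.span_of_finite A (F.finite_toSet.image χ)
      rwa [← hT1'span] at hfin
    · rintro z hz ⟨t, ht⟩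
      obtain ⟨v, hvm, rfl⟩ := Submodule.mem_map.mp ht
      apply Subtype.ext
      show z • χ v = 0
      rw [← map_smul, smul_eq_mul]
      exact hχm2 _ (mem_sq hz hvm)
  haveI hQart : IsArtinian A (((A ⧸ I) ⧸ S₂) ⧸ T1') := by
    apply isArtinian_of_torsion_of_finite hmax (myTorsion ?_)
    · refine Module.Finite.of_surjective (T1'.mkQ ∘ₗ χ) ?_
      have hs1 : Function.Surjective (S₂.mkQ ∘ₗ I.mkQ) :=
        (Submodule.mkQ_surjective _).comp (Submodule.mkQ_surjective _)
      exact (Submodule.mkQ_surjective _).comp hs1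
    · intro z hz x
      obtain ⟨y, rfl⟩ := Submodule.mkQ_surjective T1' x
      obtain ⟨q, rfl⟩ := Submodule.mkQ_surjective S₂ y
      obtain ⟨a, rfl⟩ := Submodule.mkQ_surjective I q
      rw [← map_smul, ← map_smul, ← map_smul]
      rw [Submodule.mkQ_apply, Submodule.Quotient.mk_eq_zero]
      refine Submodule.mem_map.mpr ⟨z • a, ?_, rfl⟩
      rw [smul_eq_mul]
      exact Ideal.mul_mem_right a m hz
  haveI hM₂art : IsArtinian A ((A ⧸ I) ⧸ S₂) :=
    (isArtinian_iff_submodule_quotient T1').mpr ⟨hT1'art, hQart⟩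
  exact (isArtinian_iff_submodule_quotient S₂).mpr ⟨hS₂art, hM₂art⟩

end Abstract2
section Transfer

variable {R : Type u} [CommRing R] {S : Type u} [CommRing S] {m : Ideal R}

set_option maxHeartbeats 6000000 in
theorem badPair_transfer
    (hloc : ∀ a : R, a ∉ m → IsUnit a) (hmt : m ≠ ⊤) (hm3 : m ^ 3 = ⊥)
    (e : S ≃+ (R ⧸ m) ×
      (↥m ⧸ (Submodule.comap m.subtype (m ^ 2))) × ↥(m ^ 2 : Ideal R))
    (he1 : e 1 = (1, 0, 0))
    (hemul : ∀ (a b : R) (x x' : ↥m) (y y' : ↥(m ^ 2 : Ideal R)),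
      e.symm (Ideal.Quotient.mk m a, Submodule.Quotient.mk x, y) *
        e.symm (Ideal.Quotient.mk m b, Submodule.Quotient.mk x', y') =
      e.symm (Ideal.Quotient.mk m (a * b),
        Submodule.Quotient.mk (a • x' + b • x),
        ⟨a * ↑y' + b * ↑y + ↑x * ↑x', by
          refine add_mem (add_mem (Ideal.mul_mem_left _ _ y'.2)
            (Ideal.mul_mem_left _ _ y.2)) ?_
          rw [pow_two]
          exact Ideal.mul_mem_mul x.2 x'.2⟩)) :
    ∃ n : Ideal S, (∀ s : S, s ∉ n → IsUnit s) ∧ n ≠ ⊤ ∧ n ^ 3 = ⊥ ∧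
      (BadPair R m ↔ BadPair S n) := by
  classical
  have hsqW : ∀ {x x' : R}, x ∈ m → x' ∈ m → x * x' ∈ (m ^ 2 : Ideal R) := by
    intro x x' hx hx'
    rw [pow_two]; exact Ideal.mul_mem_mul hx hx'
  have hWmem : ∀ (a b : R) (x x' : ↥m) (y y' : ↥(m ^ 2 : Ideal R)),
      a * ↑y' + b * ↑y + ↑x * ↑x' ∈ (m ^ 2 : Ideal R) :=
    fun a b x x' y y' =>
      add_mem (add_mem (Ideal.mul_mem_left _ _ y'.2) (Ideal.mul_mem_left _ _ y.2))
        (hsqW x.2 x'.2)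
  have hkill : ∀ {u z : R}, u ∈ (m ^ 2 : Ideal R) → z ∈ m → u * z = 0 := by
    intro u z hu' hz
    have h : u * z ∈ m ^ 3 := by rw [pow_succ]; exact Ideal.mul_mem_mul hu' hz
    rwa [hm3, Ideal.mem_bot] at h
  set E : R → ↥m → ↥(m ^ 2 : Ideal R) → S := fun a x y =>
    e.symm (Ideal.Quotient.mk m a, Submodule.Quotient.mk x, y) with hE
  have hEmul : ∀ (a b : R) (x x' : ↥m) (y y' : ↥(m ^ 2 : Ideal R)),
      E a x y * E b x' y' =
        E (a * b) (a • x' + b • x) ⟨a * ↑y' + b * ↑y + ↑x * ↑x', hWmem a b x x' y y'⟩ :=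
    fun a b x x' y y' => hemul a b x x' y y'
  have hEext : ∀ (a a' : R) (x x' : ↥m) (y y' : ↥(m ^ 2 : Ideal R)),
      Ideal.Quotient.mk m a = Ideal.Quotient.mk m a' →
      (Submodule.Quotient.mk x : ↥m ⧸ (Submodule.comap m.subtype (m ^ 2))) =
        Submodule.Quotient.mk x' →
      (y : R) = (y' : R) → E a x y = E a' x' y' := by
    intro a a' x x' y y' h1 h2 h3
    have h4 : y = y' := Subtype.ext h3
    rw [hE]
    show e.symm _ = e.symm _
    rw [h1, h2, h4]
  have heE : ∀ (a : R) (x : ↥m) (y : ↥(m ^ 2 : Ideal R)),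
      e (E a x y) = (Ideal.Quotient.mk m a, Submodule.Quotient.mk x, y) :=
    fun a x y => e.apply_symm_apply _
  have heE1 : ∀ (a : R) (x : ↥m) (y : ↥(m ^ 2 : Ideal R)),
      (e (E a x y)).1 = Ideal.Quotient.mk m a := by
    intro a x y; rw [heE]
  have heE2 : ∀ (a : R) (x : ↥m) (y : ↥(m ^ 2 : Ideal R)),
      (e (E a x y)).2.1 = Submodule.Quotient.mk x := by
    intro a x y; rw [heE]
  have heE3 : ∀ (a : R) (x : ↥m) (y : ↥(m ^ 2 : Ideal R)), (e (E a x y)).2.2 = y := by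
    intro a x y; rw [heE]
  have hEadd : ∀ (a a' : R) (x x' : ↥m) (y y' : ↥(m ^ 2 : Ideal R)),
      E a x y + E a' x' y' = E (a + a') (x + x') (y + y') := by
    intro a a' x x' y y'
    rw [hE]
    show e.symm _ + e.symm _ = e.symm _
    rw [← map_add e.symm]
    refine congrArg e.symm ?_
    rw [Prod.mk_add_mk, Prod.mk_add_mk, ← map_add, ← Submodule.Quotient.mk_add]
  have hE000 : E 0 0 0 = 0 := by
    rw [hE]
    show e.symm _ = 0
    rw [map_zero (Ideal.Quotient.mk m), Submodule.Quotient.mk_zero]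
    exact map_zero e.symm
  have hEdecomp : ∀ (a : R) (x : ↥m) (y : ↥(m ^ 2 : Ideal R)),
      E a x y = E a 0 0 + E 0 x y := by
    intro a x y
    rw [hEadd, add_zero, zero_add, zero_add]
  have hone : E 1 0 0 = 1 := by
    rw [hE]
    show e.symm _ = 1
    rw [map_one (Ideal.Quotient.mk m), Submodule.Quotient.mk_zero, ← he1,
      AddEquiv.symm_apply_apply]
  have hEscal : ∀ (c : R) (x : ↥m) (y : ↥(m ^ 2 : Ideal R)),
      E c 0 0 * E 0 x y = E 0 (c • x) (c • y) := by
    intro c x y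
    rw [hEmul]
    refine hEext _ _ _ _ _ _ ?_ ?_ ?_
    · rw [mul_zero]
    · rw [smul_zero, add_zero]
    · show c * ↑y + 0 * ((0 : ↥(m ^ 2 : Ideal R)) : R) + ((0 : ↥m) : R) * ↑x
        = ((c • y : ↥(m ^ 2 : Ideal R)) : R)
      have h5 : ((c • y : ↥(m ^ 2 : Ideal R)) : R) = c * ↑y := rfl
      rw [h5]
      simp
  have hEy : ∀ (x x' : ↥m) (y y' : ↥(m ^ 2 : Ideal R)),
      E 0 x y * E 0 x' y' = E 0 0 ⟨↑x * ↑x', hsqW x.2 x'.2⟩ := by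
    intro x x' y y'
    rw [hEmul]
    refine hEext _ _ _ _ _ _ ?_ ?_ ?_
    · rw [mul_zero]
    · rw [zero_smul, zero_smul, add_zero, Submodule.Quotient.mk_zero]
    · show (0:R) * ↑y' + 0 * ↑y + ↑x * ↑x' = ↑x * ↑x'
      ring
  have hrep : ∀ s : S, ∃ (a : R) (x : ↥m) (y : ↥(m ^ 2 : Ideal R)), s = E a x y := by
    intro s
    obtain ⟨a, ha⟩ := Ideal.Quotient.mk_surjective (I := m) (e s).1
    obtain ⟨x, hx⟩ := Submodule.Quotient.mk_surjective _ (e s).2.1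
    refine ⟨a, x, (e s).2.2, ?_⟩
    rw [hE]
    show s = e.symm _
    rw [ha, hx]
    rw [show ((e s).1, (e s).2.1, (e s).2.2) = e s from rfl, AddEquiv.symm_apply_apply]
  have hrep0 : ∀ s : S, (e s).1 = 0 → ∃ (x : ↥m) (y : ↥(m ^ 2 : Ideal R)),
      s = E 0 x y ∧ (e s).2.1 = Submodule.Quotient.mk x ∧ (e s).2.2 = y := by
    intro s hs
    obtain ⟨x, hx⟩ := Submodule.Quotient.mk_surjective _ (e s).2.1
    refine ⟨x, (e s).2.2, ?_, hx.symm, rfl⟩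
    rw [hE]
    show s = e.symm _
    rw [map_zero (Ideal.Quotient.mk m), ← hs, hx]
    rw [show ((e s).1, (e s).2.1, (e s).2.2) = e s from rfl, AddEquiv.symm_apply_apply]
  have hrep00 : ∀ s : S, (e s).1 = 0 → (e s).2.1 = 0 → ∃ y : ↥(m ^ 2 : Ideal R),
      s = E 0 0 y ∧ (e s).2.2 = y := by
    intro s hs1 hs2
    refine ⟨(e s).2.2, ?_, rfl⟩
    rw [hE]
    show s = e.symm _
    rw [map_zero (Ideal.Quotient.mk m), Submodule.Quotient.mk_zero, ← hs1, ← hs2]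
    rw [show ((e s).1, (e s).2.1, (e s).2.2) = e s from rfl, AddEquiv.symm_apply_apply]
  let n : Ideal S :=
    { carrier := {s | (e s).1 = 0}
      zero_mem' := by show (e 0).1 = 0; rw [map_zero]; rfl
      add_mem' := by
        intro s t hs ht
        show (e (s + t)).1 = 0
        rw [map_add]
        show (e s).1 + (e t).1 = 0
        rw [hs, ht, add_zero]
      smul_mem' := by
        intro c t ht
        show (e (c • t)).1 = 0
        obtain ⟨x', y', rfl, -, -⟩ := hrep0 t ht
        obtain ⟨a, u, v, rfl⟩ := hrep c
        rw [smul_eq_mul, hEdecomp a u v, add_mul, hEscal, hEy, map_add]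
        show (e (E 0 _ _)).1 + (e (E 0 0 _)).1 = 0
        rw [heE1, heE1, map_zero, add_zero] }
  have hnmem : ∀ s : S, s ∈ n ↔ (e s).1 = 0 := fun s => Iff.rfl
  have hnE : ∀ (x : ↥m) (y : ↥(m ^ 2 : Ideal R)), E 0 x y ∈ n := by
    intro x y
    rw [hnmem, heE1, map_zero]
  have hnt : n ≠ ⊤ := by
    intro h
    have h1 : (1 : S) ∈ n := h ▸ Submodule.mem_top
    rw [hnmem, he1] at h1
    haveI := Ideal.Quotient.nontrivial_iff.mpr hmt
    exact one_ne_zero h1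
  have hus : ∀ s : S, s ∉ n → IsUnit s := by
    intro s hs
    obtain ⟨a, x, y, rfl⟩ := hrep s
    have ham : a ∉ m := by
      intro h
      exact hs (by rw [hnmem, heE1, Ideal.Quotient.eq_zero_iff_mem]; exact h)
    obtain ⟨u, rfl⟩ := hloc a ham
    set b : R := ((u⁻¹ : Rˣ) : R) with hb
    have hab : (u : R) * b = 1 := by rw [hb]; exact u.mul_inv
    set xx : ↥(m ^ 2 : Ideal R) := ⟨↑x * ↑x, hsqW x.2 x.2⟩ with hxx
    set x'' : ↥m := -((b * b) • x) with hx''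
    set y'' : ↥(m ^ 2 : Ideal R) := -(b • (b • y + (-(b * b)) • xx)) with hy''
    refine IsUnit.of_mul_eq_one (E b x'' y'') ?_
    rw [hEmul]
    have hcx'' : (x'' : R) = -(b * b * ↑x) := rfl
    have hcy'' : (y'' : R) = -(b * (b * ↑y + -(b * b) * (↑x * ↑x))) := by
      rfl
    have h2 : ((u : R) • x'' + b • x : ↥m) = 0 := by
      apply Subtype.ext
      show (u : R) * ↑x'' + b * ↑x = 0
      rw [hcx'']
      linear_combination (-(b * (x : R))) * hab
    have h3 : ((u : R) * ↑y'' + b * ↑y + ↑x * ↑x'' : R) = 0 := by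
      rw [hcx'', hcy'']
      linear_combination (b * b * ((x : R) * ↑x) - b * ↑y) * hab
    rw [← hone]
    refine hEext _ _ _ _ _ _ ?_ ?_ ?_
    · rw [hab]
    · rw [h2, Submodule.Quotient.mk_zero]
    · exact h3.trans (by simp)
  let n₂ : Ideal S :=
    { carrier := {s | (e s).1 = 0 ∧ (e s).2.1 = 0}
      zero_mem' := by
        refine ⟨?_, ?_⟩
        · show (e 0).1 = 0; rw [map_zero]; rfl
        · show (e 0).2.1 = 0; rw [map_zero]; rfl
      add_mem' := by
        rintro s t ⟨hs1, hs2⟩ ⟨ht1, ht2⟩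
        refine ⟨?_, ?_⟩
        · show (e (s + t)).1 = 0
          rw [map_add]
          show (e s).1 + (e t).1 = 0
          rw [hs1, ht1, add_zero]
        · show (e (s + t)).2.1 = 0
          rw [map_add]
          show (e s).2.1 + (e t).2.1 = 0
          rw [hs2, ht2, add_zero]
      smul_mem' := by
        rintro c t ⟨ht1, ht2⟩
        obtain ⟨y, rfl, -⟩ := hrep00 t ht1 ht2
        obtain ⟨a, u, v, rfl⟩ := hrep c
        rw [smul_eq_mul, hEdecomp a u v, add_mul, hEscal, hEy]
        refine ⟨?_, ?_⟩
        · show (e (E 0 _ _ + E 0 0 _)).1 = 0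
          rw [map_add]
          show (e (E 0 _ _)).1 + (e (E 0 0 _)).1 = 0
          rw [heE1, heE1, map_zero, add_zero]
        · show (e (E 0 _ _ + E 0 0 _)).2.1 = 0
          rw [map_add]
          show (e (E 0 (a • (0:↥m)) _)).2.1 + (e (E 0 0 _)).2.1 = 0
          rw [heE2, heE2, smul_zero, Submodule.Quotient.mk_zero, add_zero] }
  have hn₂E : ∀ y : ↥(m ^ 2 : Ideal R), E 0 0 y ∈ n₂ := by
    intro y
    refine ⟨?_, ?_⟩
    · rw [heE1, map_zero]
    · rw [heE2, Submodule.Quotient.mk_zero]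
  have hnnle : n * n ≤ n₂ := by
    refine Ideal.mul_le.mpr ?_
    intro s hsn t htn
    obtain ⟨x, y, rfl, -, -⟩ := hrep0 s hsn
    obtain ⟨x', y', rfl, -, -⟩ := hrep0 t htn
    rw [hEy]
    exact hn₂E _
  have hn₂le : n₂ ≤ n ^ 2 := by
    rintro s ⟨hs1, hs2⟩
    obtain ⟨y, rfl, -⟩ := hrep00 s hs1 hs2
    have key : ∀ v : R, v ∈ (m * m : Ideal R) →
        ∃ hv : v ∈ (m ^ 2 : Ideal R), E 0 0 ⟨v, hv⟩ ∈ n ^ 2 := by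
      intro v hv
      refine Submodule.mul_induction_on hv ?_ ?_
      · intro r hr t ht
        refine ⟨hsqW hr ht, ?_⟩
        rw [show E 0 0 ⟨r * t, hsqW hr ht⟩ = E 0 ⟨r, hr⟩ 0 * E 0 ⟨t, ht⟩ 0 from
          (hEy ⟨r, hr⟩ ⟨t, ht⟩ 0 0).symm, pow_two]
        exact Ideal.mul_mem_mul (hnE _ _) (hnE _ _)
      · rintro v₁ v₂ ⟨h1, hm1⟩ ⟨h2, hm2⟩
        refine ⟨add_mem h1 h2, ?_⟩
        rw [show E 0 0 ⟨v₁ + v₂, add_mem h1 h2⟩ = E 0 0 ⟨v₁, h1⟩ + E 0 0 ⟨v₂, h2⟩ by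
          rw [hEadd, add_zero]
          exact hEext _ _ _ _ _ _ rfl (by rw [add_zero]) rfl]
        exact add_mem hm1 hm2
    have hyW : (y : R) ∈ (m * m : Ideal R) := by rw [← pow_two]; exact y.2
    obtain ⟨hv, hmem⟩ := key ↑y hyW
    rw [show E 0 0 y = E 0 0 ⟨↑y, hv⟩ from hEext _ _ _ _ _ _ rfl rfl rfl]
    exact hmem
  have hn2 : (n ^ 2 : Ideal S) = n₂ := by
    refine le_antisymm ?_ hn₂le
    rw [pow_two]; exact hnnle
  have hn3 : (n ^ 3 : Ideal S) = ⊥ := by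
    refine le_antisymm ?_ bot_le
    rw [pow_succ, hn2]
    refine Ideal.mul_le.mpr ?_
    rintro s ⟨hs1, hs2⟩ t ht
    obtain ⟨y, rfl, -⟩ := hrep00 s hs1 hs2
    obtain ⟨x', y', rfl, -, -⟩ := hrep0 t ht
    rw [Ideal.mem_bot, hEy]
    rw [show E 0 0 ⟨((0:↥m) : R) * ↑x', hsqW (0:↥m).2 x'.2⟩ = E 0 0 0 from
      hEext _ _ _ _ _ _ rfl rfl (by simp), hE000]
  -- membership characterization used repeatedly
  have hcoe_sub : ∀ (x₁ x₂ x₃ : ↥m), ((x₁ - x₂ - x₃ : ↥m) : R) = ↑x₁ - ↑x₂ - ↑x₃ := by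
    intro x₁ x₂ x₃; rfl
  refine ⟨n, hus, hnt, hn3, ?_, ?_⟩
  · -- BadPair R m → BadPair S n
    rintro ⟨P, Q, hm2P, hPm, hQm2, hPmQ, ⟨w, hwm2, hwQ, hcover⟩, hc, hd⟩
    set VP : Submodule R (↥m ⧸ (Submodule.comap m.subtype (m ^ 2))) :=
      Submodule.map (Submodule.comap m.subtype (m ^ 2)).mkQ
        (Submodule.comap m.subtype P) with hVPdef
    have hVPmem : ∀ v, v ∈ VP ↔ ∃ x : ↥m, (x : R) ∈ P ∧ Submodule.Quotient.mk x = v := by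
      intro v
      constructor
      · rintro ⟨x, hx, rfl⟩
        exact ⟨x, hx, rfl⟩
      · rintro ⟨x, hx, rfl⟩
        exact Submodule.mem_map.mpr ⟨x, hx, rfl⟩
    -- from a class in VP we get that any representative lies in P
    have hVPrep : ∀ x : ↥m, (Submodule.Quotient.mk x : ↥m ⧸ _) ∈ VP → (x : R) ∈ P := by
      intro x hx
      obtain ⟨x₀, hx₀P, hx₀e⟩ := (hVPmem _).mp hx
      have hdiff : (x₀ - x : ↥m) ∈ Submodule.comap m.subtype (m ^ 2) := by
        rw [← Submodule.Quotient.mk_eq_zero, Submodule.Quotient.mk_sub, hx₀e, sub_self]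
      have hd2 : (x₀ : R) - ↑x ∈ (m ^ 2 : Ideal R) := hdiff
      have : (x : R) = ↑x₀ - ((x₀ : R) - ↑x) := by ring
      rw [this]
      exact Submodule.sub_mem _ hx₀P (hm2P hd2)
    let PS : Ideal S :=
      { carrier := {s | (e s).1 = 0 ∧ (e s).2.1 ∈ VP}
        zero_mem' := by
          refine ⟨?_, ?_⟩
          · show (e 0).1 = 0; rw [map_zero]; rfl
          · show (e 0).2.1 ∈ VP
            rw [map_zero]
            exact VP.zero_mem
        add_mem' := by
          rintro s t ⟨hs1, hs2⟩ ⟨ht1, ht2⟩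
          refine ⟨?_, ?_⟩
          · show (e (s + t)).1 = 0
            rw [map_add]
            show (e s).1 + (e t).1 = 0
            rw [hs1, ht1, add_zero]
          · show (e (s + t)).2.1 ∈ VP
            rw [map_add]
            exact VP.add_mem hs2 ht2
        smul_mem' := by
          rintro c t ⟨ht1, ht2⟩
          obtain ⟨x, y, rfl, hx2, -⟩ := hrep0 t ht1
          obtain ⟨a, u, v, rfl⟩ := hrep c
          rw [smul_eq_mul, hEdecomp a u v, add_mul, hEscal, hEy]
          refine ⟨?_, ?_⟩
          · show (e (E 0 _ _ + E 0 0 _)).1 = 0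
            rw [map_add]
            show (e (E 0 _ _)).1 + (e (E 0 0 _)).1 = 0
            rw [heE1, heE1, map_zero, add_zero]
          · show (e (E 0 _ _ + E 0 0 _)).2.1 ∈ VP
            rw [map_add]
            show (e (E 0 (a • x) (a • y))).2.1 + (e (E 0 0 _)).2.1 ∈ VP
            rw [heE2, heE2, Submodule.Quotient.mk_zero, add_zero,
              Submodule.Quotient.mk_smul]
            exact VP.smul_mem a (hx2 ▸ ht2) }
    let QS : Ideal S :=
      { carrier := {s | (e s).1 = 0 ∧ (e s).2.1 = 0 ∧ ((e s).2.2 : R) ∈ Q}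
        zero_mem' := by
          refine ⟨?_, ?_, ?_⟩
          · show (e 0).1 = 0; rw [map_zero]; rfl
          · show (e 0).2.1 = 0; rw [map_zero]; rfl
          · show ((e 0).2.2 : R) ∈ Q
            rw [map_zero]
            exact Q.zero_mem
        add_mem' := by
          rintro s t ⟨hs1, hs2, hs3⟩ ⟨ht1, ht2, ht3⟩
          refine ⟨?_, ?_, ?_⟩
          · show (e (s + t)).1 = 0
            rw [map_add]
            show (e s).1 + (e t).1 = 0
            rw [hs1, ht1, add_zero]
          · show (e (s + t)).2.1 = 0
            rw [map_add]
            show (e s).2.1 + (e t).2.1 = 0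
            rw [hs2, ht2, add_zero]
          · show ((e (s + t)).2.2 : R) ∈ Q
            rw [map_add]
            show (((e s).2.2 + (e t).2.2 : _) : R) ∈ Q
            exact Q.add_mem hs3 ht3
        smul_mem' := by
          rintro c t ⟨ht1, ht2, ht3⟩
          obtain ⟨y, rfl, hy3⟩ := hrep00 t ht1 ht2
          obtain ⟨a, u, v, rfl⟩ := hrep c
          rw [smul_eq_mul, hEdecomp a u v, add_mul, hEscal, hEy]
          have hyQ : (y : R) ∈ Q := by rw [← hy3]; exact ht3
          refine ⟨?_, ?_, ?_⟩
          · show (e (E 0 _ _ + E 0 0 _)).1 = 0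
            rw [map_add]
            show (e (E 0 _ _)).1 + (e (E 0 0 _)).1 = 0
            rw [heE1, heE1, map_zero, add_zero]
          · show (e (E 0 _ _ + E 0 0 _)).2.1 = 0
            rw [map_add]
            show (e (E 0 (a • (0:↥m)) _)).2.1 + (e (E 0 0 _)).2.1 = 0
            rw [heE2, heE2, smul_zero, Submodule.Quotient.mk_zero, add_zero]
          · show ((e (E 0 _ _ + E 0 0 _)).2.2 : R) ∈ Q
            rw [map_add]
            show (((e (E 0 (a • (0:↥m)) (a • y))).2.2 +
              (e (E 0 0 ⟨(u:R) * ((0:↥m):R), hsqW u.2 (0:↥m).2⟩)).2.2 : _) : R) ∈ Q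
            rw [heE3, heE3]
            show a * (y : R) + (u : R) * ((0:↥m) : R) ∈ Q
            rw [show ((0:↥m) : R) = 0 from rfl, mul_zero, add_zero]
            exact Q.mul_mem_left a hyQ }
    refine ⟨PS, QS, ?_, ?_, ?_, ?_, ?_, ?_, ?_⟩
    · -- n² ≤ PS
      rw [hn2]
      rintro s ⟨hs1, hs2⟩
      refine ⟨hs1, ?_⟩
      rw [hs2]
      exact VP.zero_mem
    · -- PS ≤ n
      exact fun s hs => hs.1
    · -- QS ≤ n²
      rw [hn2]
      exact fun s hs => ⟨hs.1, hs.2.1⟩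
    · -- PS * n ≤ QS
      refine Ideal.mul_le.mpr ?_
      intro s hsP t htn
      obtain ⟨x, y, rfl, hx2, -⟩ := hrep0 s hsP.1
      obtain ⟨x', y', rfl, -, -⟩ := hrep0 t htn
      have hxP : (x : R) ∈ P := hVPrep x (hx2 ▸ hsP.2)
      rw [hEy]
      refine ⟨?_, ?_, ?_⟩
      · rw [heE1, map_zero]
      · rw [heE2, Submodule.Quotient.mk_zero]
      · rw [heE3]
        exact hPmQ (Ideal.mul_mem_mul hxP x'.2)
    · -- the covering element
      refine ⟨E 0 0 ⟨w, hwm2⟩, ?_, ?_, ?_⟩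
      · rw [hn2]; exact hn₂E _
      · intro h
        have h3 := h.2.2
        rw [heE3] at h3
        exact hwQ h3
      · rw [hn2]
        rintro s ⟨hs1, hs2⟩
        obtain ⟨uu, rfl, -⟩ := hrep00 s hs1 hs2
        obtain ⟨q, hq, c0, hc0, hsum⟩ := Submodule.mem_sup.mp (hcover uu.2)
        obtain ⟨a, ha⟩ := Ideal.mem_span_singleton'.mp hc0
        have hqW : q ∈ (m ^ 2 : Ideal R) := hQm2 hq
        have hawW : a * w ∈ (m ^ 2 : Ideal R) := Ideal.mul_mem_left _ a hwm2
        have hsplit : E 0 0 uu = E 0 0 ⟨q, hqW⟩ + E 0 0 ⟨a * w, hawW⟩ := by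
          rw [hEadd, add_zero]
          refine hEext _ _ _ _ _ _ rfl (by rw [add_zero]) ?_
          show (uu : R) = q + a * w
          rw [ha]; exact hsum.symm
        rw [hsplit]
        refine Submodule.add_mem _ (Submodule.mem_sup_left ?_)
          (Submodule.mem_sup_right ?_)
        · refine ⟨?_, ?_, ?_⟩
          · rw [heE1, map_zero]
          · rw [heE2, Submodule.Quotient.mk_zero]
          · rw [heE3]; exact hq
        · refine Ideal.mem_span_singleton'.mpr ⟨E a 0 0, ?_⟩
          rw [hEscal]
          refine hEext _ _ _ _ _ _ rfl (by rw [smul_zero]) ?_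
          show a * w = a * w
          rfl
    · -- condition (c)
      intro s hsn hst
      obtain ⟨x, y, hsE, hx2, -⟩ := hrep0 s hsn
      have hxP : (x : R) ∈ P := by
        refine hc ↑x x.2 ?_
        intro x' hx'
        have h6 := hst (E 0 ⟨x', hx'⟩ 0) (hnE _ _)
        rw [hsE, hEy] at h6
        have h7 := h6.2.2
        rw [heE3] at h7
        exact h7
      refine ⟨hsn, ?_⟩
      rw [hx2]
      exact (hVPmem _).mpr ⟨x, hxP, rfl⟩
    · -- finiteness condition
      rintro ⟨G, hGn, hGle⟩
      apply hd
      have hxof : ∀ s : S, ∃ x : ↥m, Submodule.Quotient.mk x = (e s).2.1 :=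
        fun s => Submodule.Quotient.mk_surjective _ _
      choose xof hxof' using hxof
      set T : Submodule R (↥m ⧸ (Submodule.comap m.subtype (m ^ 2))) :=
        Submodule.map (Submodule.comap m.subtype (m ^ 2)).mkQ
          (Submodule.span R (xof '' (↑G : Set S))) with hTdef
      have hGn' : Ideal.span (↑G : Set S) ≤ n := Ideal.span_le.mpr hGn
      have hspanG : ∀ c ∈ Ideal.span (↑G : Set S), (e c).2.1 ∈ T := by
        intro c hcs
        refine Submodule.span_induction ?_ ?_ ?_ ?_ hcs
        · intro g hg
          rw [← hxof' g]
          exact Submodule.mem_map.mpr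
            ⟨xof g, Submodule.subset_span (Set.mem_image_of_mem _ hg), rfl⟩
        · show (e 0).2.1 ∈ T
          rw [map_zero]
          exact T.zero_mem
        · intro c c' hc1 hc2 ih ih'
          show (e (c + c')).2.1 ∈ T
          rw [map_add]
          exact T.add_mem ih ih'
        · intro s c hcmem ih
          obtain ⟨xc, yc, hceq, hc2, -⟩ := hrep0 c (hGn' hcmem)
          obtain ⟨a, u, v, hseq⟩ := hrep s
          show (e (s • c)).2.1 ∈ T
          rw [smul_eq_mul, hseq, hceq, hEdecomp a u v, add_mul, hEscal, hEy, map_add]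
          show (e (E 0 (a • xc) (a • yc))).2.1 + (e (E 0 0 _)).2.1 ∈ T
          rw [heE2, heE2, Submodule.Quotient.mk_zero, add_zero,
            Submodule.Quotient.mk_smul]
          have hxcT : (Submodule.Quotient.mk xc : ↥m ⧸ _) ∈ T := hc2 ▸ ih
          exact T.smul_mem a hxcT
      refine ⟨G.image (fun g => ((xof g : ↥m) : R)), ?_, ?_⟩
      · intro r hr
        rw [Finset.coe_image] at hr
        obtain ⟨g, -, rfl⟩ := hr
        exact (xof g).2
      · intro r hr
        have hrn : E 0 ⟨r, hr⟩ 0 ∈ PS ⊔ Ideal.span (↑G : Set S) := hGle (hnE _ _)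
        obtain ⟨p, hp, c, hcs, hsum⟩ := Submodule.mem_sup.mp hrn
        have hv : (Submodule.Quotient.mk (⟨r, hr⟩ : ↥m) : ↥m ⧸ _) =
            (e p).2.1 + (e c).2.1 := by
          have h0 := heE2 0 ⟨r, hr⟩ 0
          calc (Submodule.Quotient.mk (⟨r, hr⟩ : ↥m) : ↥m ⧸ _)
              = (e (E 0 ⟨r, hr⟩ 0)).2.1 := h0.symm
            _ = (e (p + c)).2.1 := by rw [hsum]
            _ = (e p).2.1 + (e c).2.1 := by rw [map_add]; rfl
        obtain ⟨x₁, hx₁P, hx₁e⟩ := (hVPmem _).mp hp.2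
        obtain ⟨x₂, hx₂span, hx₂e⟩ := Submodule.mem_map.mp (hspanG c hcs)
        have hdiff : ((⟨r, hr⟩ : ↥m) - x₁ - x₂ : ↥m) ∈
            Submodule.comap m.subtype (m ^ 2) := by
          rw [← Submodule.Quotient.mk_eq_zero, Submodule.Quotient.mk_sub,
            Submodule.Quotient.mk_sub, hv, hx₁e]
          rw [show ((Submodule.comap m.subtype (m ^ 2)).mkQ x₂ : ↥m ⧸ _) =
            Submodule.Quotient.mk x₂ from rfl] at hx₂e
          rw [hx₂e]
          abel
        have hrm2 : r - ↑x₁ - ↑x₂ ∈ (m ^ 2 : Ideal R) := hdiff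
        have hx₂mem : (x₂ : R) ∈ Ideal.span
            ((↑(G.image (fun g => ((xof g : ↥m) : R))) : Set R)) := by
          have h8 : (x₂ : R) ∈ Submodule.map m.subtype
              (Submodule.span R (xof '' (↑G : Set S))) :=
            Submodule.mem_map.mpr ⟨x₂, hx₂span, rfl⟩
          rw [Submodule.map_span] at h8
          rw [Ideal.submodule_span_eq] at h8
          rw [Finset.coe_image]
          rwa [← Set.image_comp] at h8
        have hr' : r = (r - ↑x₁ - ↑x₂) + ↑x₁ + ↑x₂ := by ring
        rw [hr']
        refine Submodule.add_mem _ (Submodule.add_mem _ ?_ ?_) ?_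
        · exact Submodule.mem_sup_left (hm2P hrm2)
        · exact Submodule.mem_sup_left hx₁P
        · exact Submodule.mem_sup_right hx₂mem
  · -- BadPair S n → BadPair R m
    rintro ⟨P', Q', hn2P', hP'n, hQ'n2, hP'nQ', ⟨w', hw'n2, hw'Q', hcover'⟩, hc', hd'⟩
    rw [hn2] at hn2P' hQ'n2 hw'n2 hcover'
    have hEaddV : ∀ (x x' : ↥m), E 0 (x + x') 0 = E 0 x 0 + E 0 x' 0 := by
      intro x x'
      rw [hEadd, add_zero, add_zero]
    have hEaddW : ∀ (y y' : ↥(m ^ 2 : Ideal R)),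
        E 0 0 (y + y') = E 0 0 y + E 0 0 y' := by
      intro y y'
      rw [hEadd, add_zero, add_zero]
    have hEscal' : ∀ (c : R) (x : ↥m), E c 0 0 * E 0 x 0 = E 0 (c • x) 0 := by
      intro c x; rw [hEscal, smul_zero]
    have hEscalW : ∀ (c : R) (y : ↥(m ^ 2 : Ideal R)),
        E c 0 0 * E 0 0 y = E 0 0 (c • y) := by
      intro c y; rw [hEscal, smul_zero]
    have hEdecompV : ∀ (x : ↥m) (y : ↥(m ^ 2 : Ideal R)),
        E 0 x y = E 0 x 0 + E 0 0 y := by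
      intro x y
      rw [hEadd, add_zero, add_zero, zero_add]
    let P : Ideal R :=
      { carrier := {r | ∃ h : r ∈ m, E 0 ⟨r, h⟩ 0 ∈ P'}
        zero_mem' := by
          refine ⟨m.zero_mem, ?_⟩
          rw [show (⟨(0:R), m.zero_mem⟩ : ↥m) = 0 from rfl, hE000]
          exact P'.zero_mem
        add_mem' := by
          rintro r r' ⟨hr, hrP⟩ ⟨hr', hr'P⟩
          refine ⟨add_mem hr hr', ?_⟩
          rw [show (⟨r + r', add_mem hr hr'⟩ : ↥m) = ⟨r, hr⟩ + ⟨r', hr'⟩ from rfl, hEaddV]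
          exact Submodule.add_mem _ hrP hr'P
        smul_mem' := by
          rintro c r ⟨hr, hrP⟩
          have hcr : c • r ∈ m := by rw [smul_eq_mul]; exact m.mul_mem_left c hr
          refine ⟨hcr, ?_⟩
          rw [show (⟨c • r, hcr⟩ : ↥m) = c • (⟨r, hr⟩ : ↥m) from rfl, ← hEscal']
          exact Ideal.mul_mem_left _ _ hrP }
    let Q : Ideal R :=
      { carrier := {r | ∃ h : r ∈ (m ^ 2 : Ideal R), E 0 0 ⟨r, h⟩ ∈ Q'}
        zero_mem' := by
          refine ⟨Submodule.zero_mem _, ?_⟩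
          rw [show (⟨(0:R), Submodule.zero_mem _⟩ : ↥(m ^ 2 : Ideal R)) = 0 from rfl, hE000]
          exact Q'.zero_mem
        add_mem' := by
          rintro r r' ⟨hr, hrQ⟩ ⟨hr', hr'Q⟩
          refine ⟨add_mem hr hr', ?_⟩
          rw [show (⟨r + r', add_mem hr hr'⟩ : ↥(m ^ 2 : Ideal R)) = ⟨r, hr⟩ + ⟨r', hr'⟩
            from rfl, hEaddW]
          exact Submodule.add_mem _ hrQ hr'Q
        smul_mem' := by
          rintro c r ⟨hr, hrQ⟩
          have hcr : c • r ∈ (m ^ 2 : Ideal R) := by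
            rw [smul_eq_mul]; exact Ideal.mul_mem_left _ c hr
          refine ⟨hcr, ?_⟩
          rw [show (⟨c • r, hcr⟩ : ↥(m ^ 2 : Ideal R)) = c • (⟨r, hr⟩ : ↥(m ^ 2 : Ideal R))
            from rfl, ← hEscalW]
          exact Ideal.mul_mem_left _ _ hrQ }
    refine ⟨P, Q, ?_, ?_, ?_, ?_, ?_, ?_, ?_⟩
    · -- m² ≤ P
      intro r hr
      refine ⟨Ideal.pow_le_self two_ne_zero hr, ?_⟩
      have hz : (Submodule.Quotient.mk (⟨r, Ideal.pow_le_self two_ne_zero hr⟩ : ↥m)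
          : ↥m ⧸ (Submodule.comap m.subtype (m ^ 2))) = Submodule.Quotient.mk 0 := by
        rw [Submodule.Quotient.mk_zero]
        exact (Submodule.Quotient.mk_eq_zero _).mpr
          (show (⟨r, Ideal.pow_le_self two_ne_zero hr⟩ : ↥m) ∈
            Submodule.comap m.subtype (m ^ 2) from hr)
      rw [show E 0 ⟨r, Ideal.pow_le_self two_ne_zero hr⟩ 0 = E 0 0 0 from
        hEext _ _ _ _ _ _ rfl hz rfl, hE000]
      exact P'.zero_mem
    · -- P ≤ m
      exact fun r hr => hr.1
    · -- Q ≤ m²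
      exact fun r hr => hr.1
    · -- P * m ≤ Q
      refine Ideal.mul_le.mpr ?_
      rintro p ⟨hpm, hpP'⟩ z hz
      refine ⟨hsqW hpm hz, ?_⟩
      rw [show E 0 0 ⟨p * z, hsqW hpm hz⟩ = E 0 ⟨p, hpm⟩ 0 * E 0 ⟨z, hz⟩ 0 from
        (hEy ⟨p, hpm⟩ ⟨z, hz⟩ 0 0).symm]
      exact hP'nQ' (Ideal.mul_mem_mul hpP' (hnE _ _))
    · -- covering element
      obtain ⟨yw, hw'E, -⟩ := hrep00 w' hw'n2.1 hw'n2.2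
      refine ⟨(yw : R), yw.2, ?_, ?_⟩
      · rintro ⟨h, hmem⟩
        apply hw'Q'
        rw [show E 0 0 ⟨(yw : R), h⟩ = E 0 0 yw from hEext _ _ _ _ _ _ rfl rfl rfl,
          ← hw'E] at hmem
        exact hmem
      · intro u hu
        have h9 : E 0 0 ⟨u, hu⟩ ∈ Q' ⊔ Ideal.span {w'} := hcover' (hn₂E _)
        obtain ⟨q', hq', c', hc', hsum⟩ := Submodule.mem_sup.mp h9
        obtain ⟨s, hs⟩ := Ideal.mem_span_singleton'.mp hc'
        obtain ⟨a, u₂, v₂, rfl⟩ := hrep s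
        have hc'E : c' = E 0 0 (a • yw) := by
          rw [← hs, hw'E, hEdecomp a u₂ v₂, add_mul, hEscalW, hEy]
          rw [show E 0 0 ⟨(u₂ : R) * ((0:↥m) : R), hsqW u₂.2 (0:↥m).2⟩ = E 0 0 0 from
            hEext _ _ _ _ _ _ rfl rfl (by simp), hE000, add_zero]
        obtain ⟨yq, hq'E, -⟩ := hrep00 q' (hQ'n2 hq').1 (hQ'n2 hq').2
        have h11 : E 0 0 (yq + a • yw) = E 0 0 ⟨u, hu⟩ := by
          rw [hEaddW, ← hq'E, ← hc'E]
          exact hsum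
        have h12 : (yq + a • yw : ↥(m ^ 2 : Ideal R)) = ⟨u, hu⟩ := by
          have h13 := congrArg (fun s => (e s).2.2) h11
          simpa only [heE3] using h13
        have h14 : u = (yq : R) + a * (yw : R) := by
          have := congrArg (fun z : ↥(m ^ 2 : Ideal R) => (z : R)) h12
          simpa using this.symm
        rw [h14]
        refine Submodule.add_mem _ (Submodule.mem_sup_left ?_) (Submodule.mem_sup_right ?_)
        · refine ⟨yq.2, ?_⟩
          rw [show (⟨(yq : R), yq.2⟩ : ↥(m ^ 2 : Ideal R)) = yq from rfl, ← hq'E]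
          exact hq'
        · exact Ideal.mem_span_singleton'.mpr ⟨a, rfl⟩
    · -- condition (c)
      intro r hrm hrq
      refine ⟨hrm, ?_⟩
      refine hc' (E 0 ⟨r, hrm⟩ 0) (hnE _ _) ?_
      intro t htn
      obtain ⟨x', y', rfl, -, -⟩ := hrep0 t htn
      rw [hEy]
      obtain ⟨hh, hmem⟩ := hrq (x' : R) x'.2
      rw [show E 0 0 ⟨(⟨r, hrm⟩ : ↥m) * (x' : R), hsqW hrm x'.2⟩
        = E 0 0 ⟨r * (x' : R), hh⟩ from rfl]
      exact hmem
    · -- finiteness condition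
      rintro ⟨F, hFm, hFle⟩
      apply hd'
      have hFm' : ∀ f : {x // x ∈ F}, (f : R) ∈ m := fun f => hFm f.2
      set G : Finset S := F.attach.image (fun f => E 0 ⟨f.1, hFm' f⟩ 0) with hGdef
      refine ⟨G, ?_, ?_⟩
      · intro s hs
        rw [hGdef, Finset.coe_image] at hs
        obtain ⟨f, -, rfl⟩ := hs
        exact hnE _ _
      · intro t htn
        obtain ⟨x, y, rfl, -, -⟩ := hrep0 t htn
        rw [hEdecompV]
        refine Submodule.add_mem _ ?_ (Submodule.mem_sup_left (hn2P' (hn₂E y)))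
        have hx : (x : R) ∈ P ⊔ Ideal.span (↑F : Set R) := hFle x.2
        obtain ⟨p, hp, c, hc9, hsum⟩ := Submodule.mem_sup.mp hx
        obtain ⟨hpm, hpP'⟩ := hp
        have hcm : c ∈ m := by
          have h15 : c = (x : R) - p := by rw [← hsum]; ring
          rw [h15]
          exact Submodule.sub_mem _ x.2 hpm
        have h16 : x = ⟨p, hpm⟩ + ⟨c, hcm⟩ := Subtype.ext hsum.symm
        rw [h16, hEaddV]
        refine Submodule.add_mem _ (Submodule.mem_sup_left hpP')
          (Submodule.mem_sup_right ?_)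
        have key : ∀ c₀ ∈ Ideal.span (↑F : Set R), ∃ h : c₀ ∈ m,
            E 0 ⟨c₀, h⟩ 0 ∈ Ideal.span (↑G : Set S) := by
          intro c₀ hc₀
          refine Submodule.span_induction ?_ ?_ ?_ ?_ hc₀
          · intro f hf
            have hfF : f ∈ F := hf
            refine ⟨hFm hf, ?_⟩
            refine Ideal.subset_span ?_
            rw [hGdef, Finset.coe_image]
            exact ⟨⟨f, hfF⟩, by simp, rfl⟩
          · exact ⟨m.zero_mem, by
              rw [show (⟨(0:R), m.zero_mem⟩ : ↥m) = 0 from rfl, hE000]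
              exact Submodule.zero_mem _⟩
          · rintro c₁ c₂ h1 h2 ⟨hm1, hs1⟩ ⟨hm2, hs2⟩
            refine ⟨add_mem hm1 hm2, ?_⟩
            rw [show (⟨c₁ + c₂, add_mem hm1 hm2⟩ : ↥m) = ⟨c₁, hm1⟩ + ⟨c₂, hm2⟩ from rfl,
              hEaddV]
            exact Submodule.add_mem _ hs1 hs2
          · rintro r c₁ h1 ⟨hm1, hs1⟩
            have hrc : r • c₁ ∈ m := by rw [smul_eq_mul]; exact m.mul_mem_left r hm1
            refine ⟨hrc, ?_⟩
            rw [show (⟨r • c₁, hrc⟩ : ↥m) = r • (⟨c₁, hm1⟩ : ↥m) from rfl, ← hEscal']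
            exact Ideal.mul_mem_left _ _ hs1
        obtain ⟨hcm', hcspan⟩ := key c hc9
        rw [show (⟨c, hcm⟩ : ↥m) = ⟨c, hcm'⟩ from rfl]
        exact hcspan

end Transfer

/-- Let `(R, 𝔪)` be a commutative quasi-local ring with `𝔪³ = 0`.  Then `R` satisfies
(⋄) if and only if its associated graded ring `gr(R) = R/𝔪 ⊕ 𝔪/𝔪² ⊕ 𝔪²` does.
Here the associated graded ring is presented as any commutative ring `S` equipped with
an additive isomorphism `e : S ≃+ (R/𝔪) × (𝔪/𝔪²) × 𝔪²` sending `1` to `(1,0,0)` and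
transporting the graded multiplication
`(a₀,a₁,a₂)(b₀,b₁,b₂) = (a₀b₀, a₀b₁ + b₀a₁, a₀b₂ + b₀a₂ + a₁b₁)`. -/
theorem diamond_iff_gr_diamond (R : Type u) [CommRing R] [IsLocalRing R]
    (hm3 : maximalIdeal R ^ 3 = ⊥)
    (S : Type u) [CommRing S]
    (e : S ≃+ (R ⧸ maximalIdeal R) ×
      (↥(maximalIdeal R) ⧸
        (Submodule.comap (maximalIdeal R).subtype (maximalIdeal R ^ 2))) ×
      ↥(maximalIdeal R ^ 2 : Ideal R))
    (he1 : e 1 = (1, 0, 0))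
    (hemul : ∀ (a b : R) (x x' : ↥(maximalIdeal R))
      (y y' : ↥(maximalIdeal R ^ 2 : Ideal R)),
      e.symm (Ideal.Quotient.mk (maximalIdeal R) a, Submodule.Quotient.mk x, y) *
        e.symm (Ideal.Quotient.mk (maximalIdeal R) b, Submodule.Quotient.mk x', y') =
      e.symm (Ideal.Quotient.mk (maximalIdeal R) (a * b),
        Submodule.Quotient.mk (a • x' + b • x),
        ⟨a * ↑y' + b * ↑y + ↑x * ↑x', by
          refine add_mem (add_mem (Ideal.mul_mem_left _ _ y'.2)
            (Ideal.mul_mem_left _ _ y.2)) ?_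
          rw [pow_two]
          exact Ideal.mul_mem_mul x.2 x'.2⟩)) :
    HasDiamond R ↔ HasDiamond S := by
  have huR : ∀ a : R, a ∉ maximalIdeal R → IsUnit a :=
    fun a ha => IsLocalRing.notMem_maximalIdeal.mp ha
  have hmtR : maximalIdeal R ≠ ⊤ := Ideal.IsMaximal.ne_top (maximalIdeal.isMaximal R)
  obtain ⟨n, hus, hnt, hn3, hiff⟩ := badPair_transfer huR hmtR hm3 e he1 hemul
  constructor
  · intro hR
    refine hasDiamond_of_not_badPair hus hn3 hnt ?_
    intro hb
    exact not_hasDiamond_of_badPair huR hm3 hmtR (hiff.mpr hb) hR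
  · intro hS
    refine hasDiamond_of_not_badPair huR hm3 hmtR ?_
    intro hb
    exact not_hasDiamond_of_badPair hus hn3 hnt (hiff.mp hb) hS
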